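/- arXiv:1703.00885 — 7 statements merged into one kernel-verified Lean document; each statement's English description precedes it below -/
import Mathlib

section
/- Let m, d, u be natural numbers with d ≥ m+1 and u ≤ m. Let L : ℝ^d → ℝ^m be a surjective linear map. If Θ₁, Θ₂ : ℝ^m → ℝ^u are both surjective linear maps satisfying Θ₁ ∘ L (ℤ^d) ⊆ ℤ^u and Θ₂ ∘ L (ℤ^d) ⊆ ℤ^u, and u is the largest integer for which such a surjective map exists (the rational dimension of L), then ker Θ₁ = ker Θ₂. -/
lemma stmt_2_aux (m d u : ℕ)
    (L : (Fin d → ℝ) →ₗ[ℝ] (Fin m → ℝ))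
    (Θ₁ Θ₂ : (Fin m → ℝ) →ₗ[ℝ] (Fin u → ℝ))
    (h1 : Function.Surjective Θ₁)
    (hint1 : ∀ x : Fin d → ℤ, ∀ j, ∃ z : ℤ, Θ₁ (L (fun i => (x i : ℝ))) j = z)
    (hint2 : ∀ x : Fin d → ℤ, ∀ j, ∃ z : ℤ, Θ₂ (L (fun i => (x i : ℝ))) j = z)
    (hmax : ∀ u' : ℕ, ∀ Θ' : (Fin m → ℝ) →ₗ[ℝ] (Fin u' → ℝ),
      Function.Surjective Θ' →
      (∀ x : Fin d → ℤ, ∀ j, ∃ z : ℤ, Θ' (L (fun i => (x i : ℝ))) j = z) → u' ≤ u) :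
    LinearMap.ker Θ₁ ≤ LinearMap.ker Θ₂ := by
  intro v hv
  rw [LinearMap.mem_ker] at hv ⊢
  by_contra hne
  have ⟨j, hj⟩ : ∃ j, Θ₂ v j ≠ 0 := by
    by_contra h
    push_neg at h
    exact hne (funext h)
  -- Build Θ' : ℝ^m → ℝ^(u+1)
  set Θ' : (Fin m → ℝ) →ₗ[ℝ] (Fin (u + 1) → ℝ) :=
    LinearMap.pi (fun i => Fin.lastCases ((LinearMap.proj j).comp Θ₂)
      (fun k => (LinearMap.proj k).comp Θ₁) i) with hΘ'
  have happ_cast : ∀ (x : Fin m → ℝ) (k : Fin u), Θ' x k.castSucc = Θ₁ x k := by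
    intro x k
    simp [hΘ', LinearMap.pi_apply]
  have happ_last : ∀ (x : Fin m → ℝ), Θ' x (Fin.last u) = Θ₂ x j := by
    intro x
    simp [hΘ', LinearMap.pi_apply]
  have hsurj : Function.Surjective Θ' := by
    intro y
    obtain ⟨x₀, hx₀⟩ := h1 (fun k => y k.castSucc)
    refine ⟨x₀ + ((y (Fin.last u) - Θ₂ x₀ j) / (Θ₂ v j)) • v, ?_⟩
    funext i
    refine Fin.lastCases ?_ ?_ i
    · rw [happ_last]
      simp only [map_add, map_smul, Pi.add_apply, Pi.smul_apply, smul_eq_mul]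
      field_simp
      ring
    · intro k
      rw [happ_cast]
      simp only [map_add, map_smul, hv, Pi.add_apply, Pi.smul_apply, smul_eq_mul,
        Pi.zero_apply, mul_zero, add_zero]
      rw [hx₀]
  have hint' : ∀ x : Fin d → ℤ, ∀ i, ∃ z : ℤ, Θ' (L (fun i => (x i : ℝ))) i = z := by
    intro x i
    refine Fin.lastCases ?_ ?_ i
    · rw [happ_last]; exact hint2 x j
    · intro k; rw [happ_cast]; exact hint1 x k
  have := hmax (u + 1) Θ' hsurj hint'
  omega

theorem stmt_2 (m d u : ℕ) (hd : m + 1 ≤ d) (hu : u ≤ m)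
    (L : (Fin d → ℝ) →ₗ[ℝ] (Fin m → ℝ)) (hL : Function.Surjective L)
    (Θ₁ Θ₂ : (Fin m → ℝ) →ₗ[ℝ] (Fin u → ℝ))
    (h1 : Function.Surjective Θ₁) (h2 : Function.Surjective Θ₂)
    (hint1 : ∀ x : Fin d → ℤ, ∀ j, ∃ z : ℤ, Θ₁ (L (fun i => (x i : ℝ))) j = z)
    (hint2 : ∀ x : Fin d → ℤ, ∀ j, ∃ z : ℤ, Θ₂ (L (fun i => (x i : ℝ))) j = z)
    (hmax : ∀ u' : ℕ, ∀ Θ' : (Fin m → ℝ) →ₗ[ℝ] (Fin u' → ℝ),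
      Function.Surjective Θ' →
      (∀ x : Fin d → ℤ, ∀ j, ∃ z : ℤ, Θ' (L (fun i => (x i : ℝ))) j = z) → u' ≤ u) :
    LinearMap.ker Θ₁ = LinearMap.ker Θ₂ :=
  le_antisymm (stmt_2_aux m d u L Θ₁ Θ₂ h1 hint1 hint2 hmax)
    (stmt_2_aux m d u L Θ₂ Θ₁ h2 hint2 hint1 hmax)
end

section
/- Let m, d be natural numbers with d ≥ m+1, and let L : ℝ^d → ℝ^m be a surjective linear map with rational dimension u ≤ m−1, and let Θ : ℝ^m → ℝ^u be a rational map for L. Then for all τ₁, τ₂ ∈ (0,1], the infimum of dist(L*φ, ℤ^d) over all linear functionals φ on ℝ^m with dist(φ, Θ*((ℝ^u)*)) ≥ τ₁ and ‖φ‖_∞ ≤ τ₂⁻¹ is strictly positive. -/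
open Matrix Set Metric Module

lemma surj_iff_li {k n : ℕ} (M : Matrix (Fin k) (Fin n) ℝ) :
    Function.Surjective M.mulVec ↔ LinearIndependent ℝ (fun i => M i) := by
  have h1 : Function.Surjective M.mulVec ↔ LinearMap.range M.mulVecLin = ⊤ := by
    rw [LinearMap.range_eq_top]; rfl
  have h2 : LinearMap.range M.mulVecLin = ⊤ ↔ M.rank = k := by
    constructor
    · intro h
      rw [Matrix.rank, h, finrank_top, Module.finrank_fintype_fun_eq_card, Fintype.card_fin]
    · intro h
      apply Submodule.eq_top_of_finrank_eq
      rw [show finrank ℝ (LinearMap.range M.mulVecLin) = M.rank from rfl, h,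
        Module.finrank_fintype_fun_eq_card, Fintype.card_fin]
  have h3 : LinearIndependent ℝ (fun i => M i) ↔ M.rank = k := by
    constructor
    · intro h
      have := h.rank_matrix
      simpa using this
    · intro h
      rw [linearIndependent_iff_card_eq_finrank_span, Fintype.card_fin, Set.finrank]
      exact h.symm.trans (rank_eq_finrank_span_row M)
  rw [h1, h2, h3]

theorem stmt_3 (m d u : ℕ) (hd : m + 1 ≤ d) (hu : u + 1 ≤ m)
    (L : Matrix (Fin m) (Fin d) ℝ) (hL : Function.Surjective L.mulVec)
    (Θ : Matrix (Fin u) (Fin m) ℝ) (hΘ : Function.Surjective Θ.mulVec)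
    (hint : ∀ x : Fin d → ℤ, ∀ i, ∃ z : ℤ,
      Θ.mulVec (L.mulVec (fun j => (x j : ℝ))) i = z)
    (hmax : ∀ u' : ℕ, ∀ Θ' : Matrix (Fin u') (Fin m) ℝ,
      Function.Surjective Θ'.mulVec →
      (∀ x : Fin d → ℤ, ∀ i, ∃ z : ℤ,
        Θ'.mulVec (L.mulVec (fun j => (x j : ℝ))) i = z) → u' ≤ u)
    (τ₁ τ₂ : ℝ) (hτ₁ : 0 < τ₁) (hτ₁' : τ₁ ≤ 1) (hτ₂ : 0 < τ₂) (hτ₂' : τ₂ ≤ 1) :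
    ∃ δ > (0 : ℝ), ∀ φ : Fin m → ℝ,
      (∀ ψ : Fin u → ℝ, ∃ i, τ₁ ≤ |φ i - Matrix.vecMul ψ Θ i|) →
      (∀ i, |φ i| ≤ τ₂⁻¹) →
      ∀ ω : Fin d → ℤ, ∃ j, δ ≤ |Matrix.vecMul φ L j - (ω j : ℝ)| := by
  have hdpos : 0 < d := by omega
  -- the set of integer vectors
  set S : Set (Fin d → ℝ) := {v | ∀ j, ∃ z : ℤ, v j = (z : ℝ)} with hS
  have hSclosed : IsClosed S := by
    have : S = ⋂ j, (fun v : Fin d → ℝ => v j) ⁻¹' (Set.range ((↑) : ℤ → ℝ)) := by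
      ext v; simp [hS, Set.mem_iInter, eq_comm]
    rw [this]
    exact isClosed_iInter fun j =>
      (Int.isClosedEmbedding_coe_real.isClosed_range).preimage (continuous_apply j)
  have hSne : S.Nonempty := ⟨fun _ => (0 : ℝ), fun j => ⟨0, by norm_num⟩⟩
  set T : (Fin m → ℝ) → (Fin d → ℝ) := fun φ => Matrix.vecMul φ L with hT
  have hTcont : Continuous T := by
    apply continuous_pi
    intro j
    have : (fun φ : Fin m → ℝ => T φ j) = fun φ => ∑ i, φ i * L i j := by
      ext φ; simp [hT, Matrix.vecMul, dotProduct]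
    rw [this]
    exact continuous_finset_sum _ fun i _ => (continuous_apply i).mul continuous_const
  set f : (Fin m → ℝ) → ℝ := fun φ => infDist (T φ) S with hf
  have hfcont : Continuous f := (continuous_infDist_pt S).comp hTcont
  set K : Set (Fin m → ℝ) :=
    {φ | (∀ ψ : Fin u → ℝ, ∃ i, τ₁ ≤ |φ i - Matrix.vecMul ψ Θ i|) ∧ ∀ i, |φ i| ≤ τ₂⁻¹} with hK
  -- positivity on K
  have hpos : ∀ φ ∈ K, 0 < f φ := by
    rintro φ ⟨h1, _⟩
    rcases (infDist_nonneg : (0:ℝ) ≤ infDist (T φ) S).lt_or_eq with h | h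
    · exact h
    exfalso
    have hmem : T φ ∈ S := (hSclosed.mem_iff_infDist_zero hSne).2 h.symm
    obtain ⟨ω, hω⟩ : ∃ ω : Fin d → ℤ, ∀ j, T φ j = (ω j : ℝ) := by
      choose g hg using hmem
      exact ⟨g, hg⟩
    -- build the bigger rational map
    set Θ' : Matrix (Fin (u + 1)) (Fin m) ℝ := Matrix.of (Fin.cons φ Θ) with hΘ'
    have hrows : LinearIndependent ℝ (fun i => Θ' i) := by
      have hli : LinearIndependent ℝ (fun i => Θ i) := (surj_iff_li Θ).1 hΘ
      have hnot : φ ∉ Submodule.span ℝ (Set.range fun i => Θ i) := by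
        intro hsp
        have : φ ∈ LinearMap.range Θ.vecMulLinear := by
          rw [range_vecMulLinear]; exact hsp
        obtain ⟨ψ, hψ⟩ := this
        obtain ⟨i, hi⟩ := h1 ψ
        rw [show Matrix.vecMul ψ Θ = φ from hψ] at hi
        simp at hi
        linarith
      show LinearIndependent ℝ (Fin.cons φ (fun i => Θ i) : Fin (u+1) → Fin m → ℝ)
      exact linearIndependent_fin_cons.2 ⟨hli, hnot⟩
    have hsurj' : Function.Surjective Θ'.mulVec := (surj_iff_li Θ').2 hrows
    have hint' : ∀ x : Fin d → ℤ, ∀ i, ∃ z : ℤ,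
        Θ'.mulVec (L.mulVec (fun j => (x j : ℝ))) i = z := by
      intro x i
      refine Fin.cases ?_ ?_ i
      · refine ⟨∑ j, ω j * x j, ?_⟩
        have : Θ'.mulVec (L.mulVec (fun j => (x j : ℝ))) 0
            = φ ⬝ᵥ L.mulVec (fun j => (x j : ℝ)) := by
          simp [hΘ', Matrix.mulVec]
          rfl
        rw [this, Matrix.dotProduct_mulVec]
        have : Matrix.vecMul φ L ⬝ᵥ (fun j => (x j : ℝ)) = ∑ j, (ω j : ℝ) * x j := by
          simp only [dotProduct]
          exact Finset.sum_congr rfl fun j _ => by rw [← hω j]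
        rw [this]
        push_cast
        ring
      · intro i'
        obtain ⟨z, hz⟩ := hint x i'
        refine ⟨z, ?_⟩
        have : Θ'.mulVec (L.mulVec (fun j => (x j : ℝ))) i'.succ
            = Θ.mulVec (L.mulVec (fun j => (x j : ℝ))) i' := by
          simp [hΘ', Matrix.mulVec]
          rfl
        rw [this, hz]
    have := hmax (u + 1) Θ' hsurj' hint'
    omega
  -- K compact
  have hKcomp : IsCompact K := by
    apply Metric.isCompact_of_isClosed_isBounded
    · have : K = (⋂ ψ : Fin u → ℝ, ⋃ i : Fin m,
          {φ : Fin m → ℝ | τ₁ ≤ |φ i - Matrix.vecMul ψ Θ i|}) ∩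
          (⋂ i : Fin m, {φ : Fin m → ℝ | |φ i| ≤ τ₂⁻¹}) := by
        ext φ; simp [hK]
      rw [this]
      refine IsClosed.inter (isClosed_iInter fun ψ => isClosed_iUnion_of_finite fun i => ?_)
        (isClosed_iInter fun i => ?_)
      · exact isClosed_le continuous_const (((continuous_apply i).sub continuous_const).abs)
      · exact isClosed_le ((continuous_apply i).abs) continuous_const
    · apply Metric.isBounded_closedBall (x := (0 : Fin m → ℝ)) (r := τ₂⁻¹) |>.subset
      intro φ hφ
      simp only [Metric.mem_closedBall, dist_zero_right]
      exact pi_norm_le_iff_of_nonneg (by positivity) |>.2 fun i => by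
        simpa using hφ.2 i
  -- conclude
  by_cases hKne : K.Nonempty
  · obtain ⟨φ₀, hφ₀, hmin⟩ := hKcomp.exists_isMinOn hKne hfcont.continuousOn
    refine ⟨f φ₀, hpos φ₀ hφ₀, ?_⟩
    intro φ hc1 hc2 ω
    have hφK : φ ∈ K := ⟨hc1, hc2⟩
    have h1 : f φ₀ ≤ f φ := hmin hφK
    have h2 : f φ ≤ dist (T φ) (fun j => (ω j : ℝ)) :=
      infDist_le_dist_of_mem (fun j => ⟨ω j, rfl⟩)
    by_contra hcon
    push_neg at hcon
    have hnorm : dist (T φ) (fun j => (ω j : ℝ)) < f φ₀ := by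
      rw [dist_eq_norm]
      refine (pi_norm_lt_iff (hpos φ₀ hφ₀)).2 fun j => ?_
      simpa [Real.norm_eq_abs] using hcon j
    linarith
  · exact ⟨1, one_pos, fun φ hc1 hc2 => absurd ⟨hc1, hc2⟩ (fun h => hKne ⟨φ, h⟩)⟩
end

section
/- Let m, d be natural numbers with d ≥ m+1, and let c, C > 0. Let L be an m-by-d real matrix with all entries bounded in absolute value by C, and suppose every m-by-d matrix within ℓ^∞-distance c of L has rank m. Then there exists an m-by-m submatrix M of L (obtained by selecting m columns) such that |det M| ≥ δ for some δ > 0 depending only on m, d, c, C. -/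
open Matrix

lemma aux_rank_minor {m d : ℕ} (A : Matrix (Fin m) (Fin d) ℝ) (hA : A.rank = m) :
    ∃ g : Fin m → Fin d, Function.Injective g ∧ (A.submatrix id g).det ≠ 0 := by
  have hfin : Module.finrank ℝ (Fin m → ℝ) = m := Module.finrank_fin_fun ℝ
  have htop : LinearMap.range A.mulVecLin = ⊤ :=
    Submodule.eq_top_of_finrank_eq (by rw [hfin]; exact hA)
  have hspan : Submodule.span ℝ (Set.range Aᵀ) = ⊤ := by
    rw [← htop, Matrix.range_mulVecLin]; rfl
  obtain ⟨t, hts, htsp, hli⟩ := exists_linearIndependent ℝ (Set.range Aᵀ)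
  rw [hspan] at htsp
  have hsp' : ⊤ ≤ Submodule.span ℝ (Set.range ((↑) : t → (Fin m → ℝ))) := by
    rw [Subtype.range_coe]; exact htsp.ge
  let b : Module.Basis t ℝ (Fin m → ℝ) := Module.Basis.mk hli hsp'
  haveI : Fintype t := FiniteDimensional.fintypeBasisIndex b
  have hcard : Fintype.card t = m := by
    rw [← Module.finrank_eq_card_basis b, hfin]
  let e : Fin m ≃ t := (Fintype.equivFinOfCardEq hcard).symm
  have hch : ∀ x : t, ∃ j, Aᵀ j = (x : Fin m → ℝ) := fun x => hts x.2
  choose ch hch' using hch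
  refine ⟨fun k => ch (e k), ?_, ?_⟩
  · intro k1 k2 h
    apply e.injective
    apply Subtype.ext
    rw [← hch' (e k1), ← hch' (e k2)]
    simp only at h
    rw [h]
  · set M := A.submatrix id (fun k => ch (e k)) with hM
    have hcol : (fun k => Mᵀ k) = ((↑) : t → (Fin m → ℝ)) ∘ e := by
      funext k
      ext i
      have := congrFun (hch' (e k)) i
      simpa [hM] using this
    have hliM : LinearIndependent ℝ (fun k => Mᵀ k) := by
      rw [hcol]; exact hli.comp e e.injective
    have hinj : Function.Injective M.mulVec := Matrix.mulVec_injective_iff.mpr hliM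
    intro hdet
    obtain ⟨v, hv0, hMv⟩ := (Matrix.exists_mulVec_eq_zero_iff).mpr hdet
    exact hv0 (hinj (by rw [hMv, Matrix.mulVec_zero]))

lemma aux_cont {m d : ℕ} (g : Fin m → Fin d) :
    Continuous fun A : Fin m → Fin d → ℝ => ((Matrix.of A).submatrix id g).det := by
  have h : (fun A : Fin m → Fin d → ℝ => ((Matrix.of A).submatrix id g).det)
      = fun A => ∑ σ : Equiv.Perm (Fin m),
          ((Equiv.Perm.sign σ : ℤ) : ℝ) * ∏ i, A (σ i) (g i) := by
    funext A
    rw [Matrix.det_apply]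
    congr 1
    funext σ
    simp [Matrix.submatrix_apply, Units.smul_def, zsmul_eq_mul]
  rw [h]
  apply continuous_finset_sum
  intro σ _
  exact continuous_const.mul (continuous_finset_prod _ fun i _ =>
    (continuous_apply (g i)).comp (continuous_apply (σ i)))

theorem stmt_4 (m d : ℕ) (hd : m + 1 ≤ d) (c C : ℝ) (hc : 0 < c) (hC : 0 < C) :
    ∃ δ > (0 : ℝ), ∀ L : Matrix (Fin m) (Fin d) ℝ,
      (∀ i j, |L i j| ≤ C) →
      (∀ L' : Matrix (Fin m) (Fin d) ℝ, (∀ i j, |L i j - L' i j| < c) → L'.rank = m) →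
      ∃ g : Fin m → Fin d, Function.Injective g ∧ δ ≤ |(L.submatrix id g).det| := by
  rcases Nat.eq_zero_or_pos m with hm | hm
  · subst hm
    refine ⟨1, one_pos, fun L _ _ => ⟨Fin.elim0, fun k => k.elim0, ?_⟩⟩
    simp [Matrix.det_isEmpty]
  -- now m ≥ 1, so d ≥ 2 > 0
  have hd0 : 0 < d := lt_of_lt_of_le (Nat.succ_pos m) hd
  haveI : Nonempty (Fin d) := ⟨⟨0, hd0⟩⟩
  set Y := (Fin m → Fin d → ℝ) with hY
  set V : Set Y := {A | (Matrix.of A).rank ≠ m} with hV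
  have hVne : V.Nonempty := by
    refine ⟨0, ?_⟩
    have : (Matrix.of (0 : Y)) = (0 : Matrix (Fin m) (Fin d) ℝ) := rfl
    simp only [hV, Set.mem_setOf_eq, this, Matrix.rank_zero]
    omega
  set K : Set Y := {A | (∀ i j, |A i j| ≤ C) ∧ c ≤ Metric.infDist A V} with hK
  -- membership lemma
  have hmem : ∀ L : Matrix (Fin m) (Fin d) ℝ,
      (∀ i j, |L i j| ≤ C) →
      (∀ L' : Matrix (Fin m) (Fin d) ℝ, (∀ i j, |L i j - L' i j| < c) → L'.rank = m) →
      (Matrix.of.symm L) ∈ K := by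
    intro L hLC hLr
    refine ⟨fun i j => hLC i j, ?_⟩
    by_contra hlt
    push_neg at hlt
    obtain ⟨B, hBV, hBd⟩ := (Metric.infDist_lt_iff hVne).mp hlt
    apply hBV
    apply hLr (Matrix.of B)
    intro i j
    have h1 : dist (Matrix.of.symm L i) (B i) ≤ dist (Matrix.of.symm L) B :=
      dist_le_pi_dist _ _ i
    have h2 : dist (Matrix.of.symm L i j) (B i j) ≤ dist (Matrix.of.symm L i) (B i) :=
      dist_le_pi_dist _ _ j
    have : |L i j - Matrix.of B i j| = dist (Matrix.of.symm L i j) (B i j) := by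
      rw [Real.dist_eq]; rfl
    rw [this]
    exact lt_of_le_of_lt (h2.trans h1) hBd
  by_cases hKne : K.Nonempty
  swap
  · refine ⟨1, one_pos, fun L hLC hLr => absurd ⟨_, hmem L hLC hLr⟩ hKne⟩
  -- compactness
  have hKcl : IsClosed K := by
    have h1 : IsClosed {A : Y | ∀ i j, |A i j| ≤ C} := by
      have : {A : Y | ∀ i j, |A i j| ≤ C} = ⋂ i, ⋂ j, {A : Y | |A i j| ≤ C} := by
        ext A; simp [Set.mem_iInter]
      rw [this]
      exact isClosed_iInter fun i => isClosed_iInter fun j =>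
        isClosed_le (((continuous_apply j).comp (continuous_apply i)).abs) continuous_const
    have h2 : IsClosed {A : Y | c ≤ Metric.infDist A V} :=
      isClosed_le continuous_const (Metric.continuous_infDist_pt V)
    exact h1.inter h2
  have hKsub : K ⊆ Metric.closedBall (0 : Y) C := by
    intro A hA
    rw [Metric.mem_closedBall, dist_pi_le_iff hC.le]
    intro i
    rw [dist_pi_le_iff hC.le]
    intro j
    have : dist (A i j) ((0 : Y) i j) = |A i j| := Real.dist_0_eq_abs _
    rw [this]
    exact hA.1 i j
  have hKcomp : IsCompact K :=
    (isCompact_closedBall (0 : Y) C).of_isClosed_subset hKcl hKsub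
  -- the function f
  set f : Y → ℝ := fun A => ∑ g : Fin m → Fin d, |((Matrix.of A).submatrix id g).det|
    with hf
  have hfc : Continuous f := by
    apply continuous_finset_sum
    intro g _
    exact (aux_cont g).abs
  obtain ⟨A₀, hA₀K, hmin⟩ := hKcomp.exists_isMinOn hKne hfc.continuousOn
  set μ := f A₀ with hμdef
  have hμ : 0 < μ := by
    have hrk : (Matrix.of A₀).rank = m := by
      by_contra hne
      have : Metric.infDist A₀ V = 0 := Metric.infDist_zero_of_mem hne
      have := hA₀K.2
      rw [‹Metric.infDist A₀ V = 0›] at this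
      exact absurd (lt_of_lt_of_le hc this) (lt_irrefl 0)
    obtain ⟨g₀, hg₀i, hg₀d⟩ := aux_rank_minor (Matrix.of A₀) hrk
    have h1 : |((Matrix.of A₀).submatrix id g₀).det| ≤ μ := by
      apply Finset.single_le_sum (f := fun g => |((Matrix.of A₀).submatrix id g).det|)
      · intro g _; exact abs_nonneg _
      · exact Finset.mem_univ g₀
    exact lt_of_lt_of_le (abs_pos.mpr hg₀d) h1
  have hN : (0 : ℝ) < (d : ℝ) ^ m := pow_pos (by exact_mod_cast hd0) m
  refine ⟨μ / (d : ℝ) ^ m, div_pos hμ hN, ?_⟩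
  intro L hLC hLr
  have hLK := hmem L hLC hLr
  have hfL : μ ≤ f (Matrix.of.symm L) := hmin hLK
  by_contra hcon
  push_neg at hcon
  have hall : ∀ g : Fin m → Fin d, |(L.submatrix id g).det| < μ / (d : ℝ) ^ m := by
    intro g
    by_cases hg : Function.Injective g
    · exact hcon g hg
    · have : (L.submatrix id g).det = 0 := by
        rw [Function.not_injective_iff] at hg
        obtain ⟨a, b, hab, hne⟩ := hg
        exact Matrix.det_zero_of_column_eq hne (fun k => by
          simp [Matrix.submatrix_apply, hab])
      rw [this, abs_zero]
      exact div_pos hμ hN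
  have hsum : f (Matrix.of.symm L) < μ := by
    have hcount : (Fintype.card (Fin m → Fin d) : ℝ) = (d : ℝ) ^ m := by
      simp [Fintype.card_fun]
    calc f (Matrix.of.symm L)
        = ∑ g : Fin m → Fin d, |(L.submatrix id g).det| := by
          simp [hf]
      _ < ∑ _g : Fin m → Fin d, μ / (d : ℝ) ^ m :=
          Finset.sum_lt_sum_of_nonempty Finset.univ_nonempty (fun g _ => hall g)
      _ = (Fintype.card (Fin m → Fin d) : ℝ) * (μ / (d : ℝ) ^ m) := by
          rw [Finset.sum_const, Finset.card_univ, nsmul_eq_mul]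
      _ = μ := by
          rw [hcount, mul_div_cancel₀ _ (ne_of_gt hN)]
  exact absurd hfL (not_le.mpr hsum)
end

section
/- Let u, d be natural numbers with d ≥ u+1, and let S : ℝ^d → ℝ^u be a surjective linear map with S(ℤ^d) ⊆ ℤ^u and with all matrix entries bounded by C in absolute value. Then S(ℤ^d) is a full-rank sublattice of ℤ^u, and there exists a basis a₁, …, a_u ∈ ℤ^u of the lattice S(ℤ^d) with ‖a_i‖_∞ bounded by a constant depending only on u, d, C, together with vectors x₁, …, x_u ∈ ℤ^d such that S(x_i) = a_i and ‖x_i‖_∞ bounded by a constant depending only on u, d, C. -/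
open Function Matrix Submodule

def Concl (u d : ℕ) (S : Matrix (Fin u) (Fin d) ℝ) (K : ℝ) : Prop :=
  Submodule.span ℝ
      {v : Fin u → ℝ | ∃ x : Fin d → ℤ, S.mulVec (fun j => (x j : ℝ)) = v} = ⊤ ∧
  ∃ a : Fin u → Fin u → ℤ, ∃ xv : Fin u → Fin d → ℤ,
    (∀ i j, |(a i j : ℝ)| ≤ K) ∧ (∀ i j, |(xv i j : ℝ)| ≤ K) ∧
    (∀ i, S.mulVec (fun j => (xv i j : ℝ)) = fun j => (a i j : ℝ)) ∧
    (∀ x : Fin d → ℤ, ∃! cvec : Fin u → ℤ,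
      S.mulVec (fun j => (x j : ℝ)) = fun i => ∑ t, (cvec t : ℝ) * (a t i : ℝ))

theorem concl_mono {u d : ℕ} {S : Matrix (Fin u) (Fin d) ℝ} {K K' : ℝ}
    (h : Concl u d S K) (hKK' : K ≤ K') : Concl u d S K' := by
  obtain ⟨h1, a, xv, ha, hxv, h2, h3⟩ := h
  exact ⟨h1, a, xv, fun i j => (ha i j).trans hKK', fun i j => (hxv i j).trans hKK', h2, h3⟩

theorem cast_single (d : ℕ) (j : Fin d) :
    (fun k => ((Pi.single j (1:ℤ) : Fin d → ℤ) k : ℝ)) = Pi.single j (1:ℝ) := by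
  ext k
  by_cases h : k = j <;> simp [Pi.single_apply, h]

theorem cast_mulVec {u d : ℕ} (T : Matrix (Fin u) (Fin d) ℤ) (x : Fin d → ℤ) :
    (T.map (Int.cast : ℤ → ℝ)).mulVec (fun j => (x j : ℝ))
      = fun i => ((T.mulVec x) i : ℝ) := by
  ext i
  simp [Matrix.mulVec, dotProduct, Matrix.map_apply]

theorem core {u d : ℕ} (T : Matrix (Fin u) (Fin d) ℤ)
    (hs : Function.Surjective (T.map (Int.cast : ℤ → ℝ)).mulVec) :
    ∃ K > 0, Concl u d (T.map (Int.cast : ℤ → ℝ)) K := by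
  set S := T.map (Int.cast : ℤ → ℝ) with hS
  -- span statement
  have hspan : Submodule.span ℝ
      {v : Fin u → ℝ | ∃ x : Fin d → ℤ, S.mulVec (fun j => (x j : ℝ)) = v} = ⊤ := by
    rw [eq_top_iff]
    rintro v -
    obtain ⟨y, rfl⟩ := hs v
    have hy : y = ∑ j, y j • (Pi.single j 1 : Fin d → ℝ) := by
      conv_lhs => rw [← Finset.univ_sum_single y]
      refine Finset.sum_congr rfl fun j _ => ?_
      ext k
      by_cases h : k = j <;> simp [Pi.single_apply, h]
    rw [hy]
    have : S.mulVec (∑ j, y j • (Pi.single j 1 : Fin d → ℝ))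
        = ∑ j, y j • S.mulVec (Pi.single j 1 : Fin d → ℝ) := by
      rw [← Matrix.mulVecLin_apply, map_sum]
      simp only [_root_.map_smul, Matrix.mulVecLin_apply]
    rw [this]
    refine Submodule.sum_mem _ fun j _ => Submodule.smul_mem _ _ (Submodule.subset_span ?_)
    exact ⟨Pi.single j 1, by rw [cast_single]⟩
  -- the lattice
  set L : Submodule ℤ (Fin u → ℤ) := LinearMap.range T.mulVecLin with hL
  obtain ⟨n, b⟩ := Submodule.basisOfPid (Pi.basisFun ℤ (Fin u)) L
  have hn_le : n ≤ u := by
    have h1 : Module.finrank ℤ L = n := by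
      rw [Module.finrank_eq_card_basis b, Fintype.card_fin]
    have h2 : Module.finrank ℤ L ≤ Module.finrank ℤ (Fin u → ℤ) := L.finrank_le
    rw [h1, Module.finrank_pi, Fintype.card_fin] at h2
    exact h2
  -- realification of basis spans ℝ^u
  have hu_le : u ≤ n := by
    set w : Fin n → (Fin u → ℝ) := fun i k => (((b i : Fin u → ℤ)) k : ℝ) with hw
    have hsub : {v : Fin u → ℝ | ∃ x : Fin d → ℤ, S.mulVec (fun j => (x j : ℝ)) = v}
        ⊆ ↑(Submodule.span ℝ (Set.range w)) := by
      rintro v ⟨x, rfl⟩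
      rw [cast_mulVec]
      have hyL : T.mulVec x ∈ L := ⟨x, rfl⟩
      have hrepr := b.sum_repr ⟨T.mulVec x, hyL⟩
      have : (fun i => ((T.mulVec x) i : ℝ))
          = ∑ t, ((b.repr ⟨T.mulVec x, hyL⟩) t : ℝ) • w t := by
        ext k
        have := congrArg (fun z : L => ((z : Fin u → ℤ) k : ℝ)) hrepr
        simp only at this
        rw [← this]
        push_cast [Submodule.coe_sum, Finset.sum_apply]
        simp [w]
      rw [this]
      exact Submodule.sum_mem _ fun t _ =>
        Submodule.smul_mem _ _ (Submodule.subset_span (Set.mem_range_self t))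
    have htop : Submodule.span ℝ (Set.range w) = ⊤ := by
      rw [eq_top_iff, ← hspan]
      exact Submodule.span_le.mpr hsub
    have := finrank_range_le_card (R := ℝ) w
    rw [Set.finrank, htop, finrank_top, Module.finrank_pi, Fintype.card_fin,
      Fintype.card_fin] at this
    exact this
  have hnu : n = u := le_antisymm hn_le hu_le
  let b' : Module.Basis (Fin u) ℤ L := b.reindex (finCongr hnu)
  set a : Fin u → Fin u → ℤ := fun i => (b' i : Fin u → ℤ) with ha
  have hxv : ∀ i, ∃ x : Fin d → ℤ, T.mulVec x = a i := fun i => (b' i).2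
  choose xv hxvs using hxv
  -- linear independence of a
  have hli : LinearIndependent ℤ a := by
    have := b'.linearIndependent.map' L.subtype (Submodule.ker_subtype L)
    exact this
  -- bound
  refine ⟨1 + (∑ i, ∑ j, |(a i j : ℝ)|) + (∑ i, ∑ j, |(xv i j : ℝ)|), by positivity, hspan,
    a, xv, ?_, ?_, ?_, ?_⟩
  · intro i j
    have h1 : |(a i j : ℝ)| ≤ ∑ j', |(a i j' : ℝ)| :=
      Finset.single_le_sum (f := fun k => |(a i k : ℝ)|) (fun k _ => abs_nonneg _)
        (Finset.mem_univ j)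
    have h2 : (∑ j', |(a i j' : ℝ)|) ≤ ∑ i', ∑ j', |(a i' j' : ℝ)| :=
      Finset.single_le_sum (f := fun i' => ∑ j', |(a i' j' : ℝ)|)
        (fun k _ => Finset.sum_nonneg fun _ _ => abs_nonneg _) (Finset.mem_univ i)
    have h3 : (0:ℝ) ≤ ∑ i', ∑ j', |(xv i' j' : ℝ)| :=
      Finset.sum_nonneg fun _ _ => Finset.sum_nonneg fun _ _ => abs_nonneg _
    linarith
  · intro i j
    have h1 : |(xv i j : ℝ)| ≤ ∑ j', |(xv i j' : ℝ)| :=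
      Finset.single_le_sum (f := fun k => |(xv i k : ℝ)|) (fun k _ => abs_nonneg _)
        (Finset.mem_univ j)
    have h2 : (∑ j', |(xv i j' : ℝ)|) ≤ ∑ i', ∑ j', |(xv i' j' : ℝ)| :=
      Finset.single_le_sum (f := fun i' => ∑ j', |(xv i' j' : ℝ)|)
        (fun k _ => Finset.sum_nonneg fun _ _ => abs_nonneg _) (Finset.mem_univ i)
    have h3 : (0:ℝ) ≤ ∑ i', ∑ j', |(a i' j' : ℝ)| :=
      Finset.sum_nonneg fun _ _ => Finset.sum_nonneg fun _ _ => abs_nonneg _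
    linarith
  · intro i
    rw [cast_mulVec, hxvs i]
  · intro x
    have hyL : T.mulVec x ∈ L := ⟨x, rfl⟩
    set c : Fin u → ℤ := fun t => b'.repr ⟨T.mulVec x, hyL⟩ t with hc
    have hceq : ∀ i, (∑ t, c t * a t i) = (T.mulVec x) i := by
      intro i
      have hrepr := b'.sum_repr ⟨T.mulVec x, hyL⟩
      have := congrArg (fun z : L => (z : Fin u → ℤ) i) hrepr
      simp only at this
      rw [← this]
      rw [Submodule.coe_sum, Finset.sum_apply]
      refine Finset.sum_congr rfl fun t _ => ?_
      simp [a, c]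
    refine ⟨c, ?_, ?_⟩
    · rw [cast_mulVec]
      ext i
      rw [← hceq i]
      push_cast
      rfl
    · intro c' hc'
      rw [cast_mulVec] at hc'
      have hint : ∀ i, (∑ t, c' t * a t i) = (T.mulVec x) i := by
        intro i
        have := congrFun hc' i
        have h2 : ((∑ t, c' t * a t i : ℤ) : ℝ) = ((T.mulVec x) i : ℝ) := by
          push_cast
          rw [this]
        exact_mod_cast h2
      have hzero : (∑ t, (c' t - c t) • a t) = 0 := by
        ext i
        simp only [Finset.sum_apply, Pi.zero_apply, Pi.smul_apply, smul_eq_mul, sub_mul]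
        rw [Finset.sum_sub_distrib, hceq i, hint i, sub_self]
      have hz := Fintype.linearIndependent_iff.mp hli (fun t => c' t - c t) hzero
      ext t
      exact sub_eq_zero.mp (hz t)

theorem stmt_6 (u d : ℕ) (hd : u + 1 ≤ d) (C : ℝ) (hC : 0 < C) :
    ∃ K > (0 : ℝ), ∀ S : Matrix (Fin u) (Fin d) ℝ,
      Function.Surjective S.mulVec →
      (∀ i j, |S i j| ≤ C) →
      (∀ x : Fin d → ℤ, ∀ i, ∃ z : ℤ, S.mulVec (fun j => (x j : ℝ)) i = z) →
      Submodule.span ℝ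
          {v : Fin u → ℝ | ∃ x : Fin d → ℤ, S.mulVec (fun j => (x j : ℝ)) = v} = ⊤ ∧
      ∃ a : Fin u → Fin u → ℤ, ∃ xv : Fin u → Fin d → ℤ,
        (∀ i j, |(a i j : ℝ)| ≤ K) ∧ (∀ i j, |(xv i j : ℝ)| ≤ K) ∧
        (∀ i, S.mulVec (fun j => (xv i j : ℝ)) = fun j => (a i j : ℝ)) ∧
        (∀ x : Fin d → ℤ, ∃! cvec : Fin u → ℤ,
          S.mulVec (fun j => (x j : ℝ)) = fun i => ∑ t, (cvec t : ℝ) * (a t i : ℝ)) := by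
  classical
  set M : ℤ := ⌈C⌉ with hM
  set σ := Fin u → Fin d → {z : ℤ // z ∈ Finset.Icc (-M) M} with hσ
  set f : σ → ℝ := fun t =>
    if h : Function.Surjective
        ((Matrix.of fun i j => ((t i j : ℤ))).map (Int.cast : ℤ → ℝ)).mulVec then
      Classical.choose (core _ h)
    else 1 with hf
  refine ⟨1 + ∑ t : σ, |f t|, by positivity, ?_⟩
  intro S hsurj hbound hint
  set T : Matrix (Fin u) (Fin d) ℤ :=
    Matrix.of fun i j => Classical.choose (hint (Pi.single j 1) i) with hT
  have hST : ∀ i j, S i j = (T i j : ℝ) := by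
    intro i j
    have hmv : (S.mulVec fun k => (((Pi.single j 1 : Fin d → ℤ)) k : ℝ)) i = S i j := by
      rw [cast_single]
      simp
    rw [hT, ← hmv]
    exact Classical.choose_spec (hint (Pi.single j 1) i)

  have hSmap : S = T.map (Int.cast : ℤ → ℝ) := by
    ext i j
    simp [Matrix.map_apply, hST i j]
  have hTmem : ∀ i j, T i j ∈ Finset.Icc (-M) M := by
    intro i j
    have h1 : |(T i j : ℝ)| ≤ C := by rw [← hST i j]; exact hbound i j
    have h2 : |(T i j : ℝ)| ≤ (M : ℝ) := h1.trans (Int.le_ceil C)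
    have h3 : |T i j| ≤ M := by exact_mod_cast h2
    rw [Finset.mem_Icc]
    exact abs_le.mp h3
  set t0 : σ := fun i j => ⟨T i j, hTmem i j⟩ with ht0
  have hTT : (Matrix.of fun i j => ((t0 i j : ℤ))) = T := rfl
  have hP : Function.Surjective
      ((Matrix.of fun i j => ((t0 i j : ℤ))).map (Int.cast : ℤ → ℝ)).mulVec := by
    rw [hTT, ← hSmap]; exact hsurj
  have hfval : f t0 = Classical.choose (core _ hP) := dif_pos hP
  have hspec := Classical.choose_spec (core _ hP)
  have hconcl : Concl u d S (f t0) := by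
    rw [hfval, hSmap]
    exact hspec.2
  have hle : f t0 ≤ 1 + ∑ t : σ, |f t| := by
    have h1 : f t0 ≤ |f t0| := le_abs_self _
    have h2 : |f t0| ≤ ∑ t : σ, |f t| :=
      Finset.single_le_sum (f := fun t => |f t|) (fun t _ => abs_nonneg _)
        (Finset.mem_univ t0)
    linarith
  exact concl_mono hconcl hle
end

section
/- Let h ≤ d be natural numbers and let Ξ : ℝ^h → ℝ^d be an injective linear map with integer matrix entries of absolute value at most C, satisfying Ξ(ℤ^h) = ℤ^d ∩ Ξ(ℝ^h). Then there exists η > 0, depending only on h, d, C, such that: for all n, r ∈ ℤ^d, if the ℓ^∞-distance from n to the affine subspace Ξ(ℝ^h) + r is at most η, then n = Ξ(m) + r for a unique m ∈ ℤ^h. -/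
open Matrix

lemma entry_bound_mul {a b c : ℕ} (P : Matrix (Fin a) (Fin b) ℤ) (Q : Matrix (Fin b) (Fin c) ℤ)
    {p q : ℤ} (hp : ∀ i j, |P i j| ≤ p) (hq : ∀ i j, |Q i j| ≤ q) (i : Fin a) (j : Fin c) :
    |(P * Q) i j| ≤ b * (p * q) := by
  have : (P * Q) i j = ∑ k : Fin b, P i k * Q k j := by simp [Matrix.mul_apply]
  rw [this]
  calc |∑ k : Fin b, P i k * Q k j| ≤ ∑ k : Fin b, |P i k * Q k j| :=
        Finset.abs_sum_le_sum_abs _ _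
    _ ≤ ∑ _k : Fin b, p * q := Finset.sum_le_sum fun k _ => by
        rw [abs_mul]
        exact mul_le_mul (hp i k) (hq k j) (abs_nonneg _) ((abs_nonneg _).trans (hp i k))
    _ = b * (p * q) := by simp [mul_comm]

lemma adj_bound {h : ℕ} (G : Matrix (Fin h) (Fin h) ℤ) {g : ℤ}
    (hG : ∀ i j, |G i j| ≤ g) (i j : Fin h) :
    |G.adjugate i j| ≤ (h.factorial : ℤ) * (g + 1) ^ h := by
  rw [Matrix.adjugate_apply]
  have hb : ∀ a b, |(G.updateRow j (Pi.single i 1)) a b| ≤ g + 1 := by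
    intro a b
    by_cases hab : a = j
    · subst hab
      rw [Matrix.updateRow_self]
      by_cases hbi : b = i
      · subst hbi; simp; have := (abs_nonneg (G a b)).trans (hG a b); omega
      · rw [Pi.single_eq_of_ne hbi]
        have := (abs_nonneg (G a b)).trans (hG a b); simp; omega
    · rw [Matrix.updateRow_ne hab]
      exact (hG a b).trans (by omega)
  have := Matrix.det_le (abv := AbsoluteValue.abs) (x := g + 1) hb
  simpa [Fintype.card_fin, nsmul_eq_mul] using this

lemma det_bound {h : ℕ} (G : Matrix (Fin h) (Fin h) ℤ) {g : ℤ}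
    (hG : ∀ i j, |G i j| ≤ g) : |G.det| ≤ (h.factorial : ℤ) * (g + 1) ^ h := by
  have := Matrix.det_le (abv := AbsoluteValue.abs) (x := g + 1)
    (fun i j => (hG i j).trans (by omega))
  simpa [Fintype.card_fin, nsmul_eq_mul] using this

lemma cast_mulVec_s8 {a b : ℕ} (P : Matrix (Fin a) (Fin b) ℤ) (v : Fin b → ℤ) (i : Fin a) :
    ((P.mulVec v i : ℤ) : ℝ) = (P.map (Int.cast : ℤ → ℝ)).mulVec (fun j => (v j : ℝ)) i := by
  simpa [Function.comp_def] using RingHom.map_mulVec (Int.castRingHom ℝ) P v i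

theorem stmt_8 (h d : ℕ) (hhd : h ≤ d) (C : ℤ) (hC : 0 < C) :
    ∃ η > (0 : ℝ), ∀ X : Matrix (Fin d) (Fin h) ℤ,
      (∀ i j, |X i j| ≤ C) →
      Function.Injective (X.map (Int.cast : ℤ → ℝ)).mulVec →
      ({n : Fin d → ℤ | ∃ m : Fin h → ℤ, X.mulVec m = n} =
        {n : Fin d → ℤ | ∃ y : Fin h → ℝ,
          (X.map (Int.cast : ℤ → ℝ)).mulVec y = fun i => (n i : ℝ)}) →
      ∀ n r : Fin d → ℤ,
        (∃ y : Fin h → ℝ, ∀ i,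
          |(n i : ℝ) - ((X.map (Int.cast : ℤ → ℝ)).mulVec y i + (r i : ℝ))| ≤ η) →
        ∃! m : Fin h → ℤ, n = X.mulVec m + r := by
  classical
  set g : ℤ := (d : ℤ) * (C * C) with hgdef
  have hg0 : (0 : ℤ) ≤ g := by positivity
  set bA : ℤ := (h.factorial : ℤ) * (g + 1) ^ h with hbAdef
  have hbA0 : (0 : ℤ) ≤ bA := by positivity
  set K : ℤ := bA + (h : ℤ) * (C * ((h : ℤ) * (bA * C))) with hKdef
  have hK0 : (0 : ℤ) ≤ K := by positivity
  have hdK : (0 : ℤ) < (d : ℤ) * K + 1 := by positivity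
  have hdKR : (0 : ℝ) < (((d : ℤ) * K + 1 : ℤ) : ℝ) := by exact_mod_cast hdK
  refine ⟨(((d : ℤ) * K + 1 : ℤ) : ℝ)⁻¹, inv_pos.mpr hdKR, ?_⟩
  intro X hXC hinj hlat n r ⟨y, hy⟩
  set Xr := X.map (Int.cast : ℤ → ℝ) with hXrdef
  set G := Xᵀ * X with hGdef
  set A := G.adjugate * Xᵀ with hAdef
  set M := X * A with hMdef
  set L := G.det • (1 : Matrix (Fin d) (Fin d) ℤ) - M with hLdef
  have hXT : ∀ i j, |Xᵀ i j| ≤ C := fun i j => hXC j i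
  have hGb : ∀ i j, |G i j| ≤ g := fun i j => entry_bound_mul Xᵀ X hXT hXC i j
  have hAdj : ∀ i j, |G.adjugate i j| ≤ bA := adj_bound G hGb
  have hDet : |G.det| ≤ bA := det_bound G hGb
  have hAb : ∀ i j, |A i j| ≤ (h : ℤ) * (bA * C) := fun i j =>
    entry_bound_mul _ _ hAdj hXT i j
  have hMb : ∀ i j, |M i j| ≤ (h : ℤ) * (C * ((h : ℤ) * (bA * C))) := fun i j =>
    entry_bound_mul _ _ hXC hAb i j
  have hLb : ∀ i j, |L i j| ≤ K := by
    intro i j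
    have h1 : |(G.det • (1 : Matrix (Fin d) (Fin d) ℤ)) i j| ≤ bA := by
      rw [Matrix.smul_apply, Matrix.one_apply]
      split
      · simpa using hDet
      · simpa using hbA0
    calc |L i j| = |(G.det • (1 : Matrix (Fin d) (Fin d) ℤ)) i j - M i j| := by
          rw [hLdef, Matrix.sub_apply]
      _ ≤ |(G.det • (1 : Matrix (Fin d) (Fin d) ℤ)) i j| + |M i j| := abs_sub _ _
      _ ≤ bA + (h : ℤ) * (C * ((h : ℤ) * (bA * C))) := add_le_add h1 (hMb i j)
  have hLX : L * X = 0 := by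
    have h1 : A * X = G.det • (1 : Matrix (Fin h) (Fin h) ℤ) := by
      rw [hAdef, Matrix.mul_assoc, ← hGdef, Matrix.adjugate_mul]
    have h2 : M * X = G.det • X := by
      rw [hMdef, Matrix.mul_assoc, h1, Matrix.mul_smul, Matrix.mul_one]
    rw [hLdef, Matrix.sub_mul, h2, Matrix.smul_mul, Matrix.one_mul, sub_self]
  have hLXr : (L.map (Int.cast : ℤ → ℝ)) * Xr = 0 := by
    ext i j
    have hz : ((L * X) i j : ℤ) = 0 := by rw [hLX]; rfl
    have : (L.map (Int.cast : ℤ → ℝ) * Xr) i j = (((L * X) i j : ℤ) : ℝ) := by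
      rw [hXrdef]
      simp only [Matrix.mul_apply, Matrix.map_apply]
      push_cast
      rfl
    rw [this, hz]
    simp
  set w : Fin d → ℤ := n - r with hwdef
  set e : Fin d → ℝ := fun i => ((w i : ℤ) : ℝ) - Xr.mulVec y i with hedef
  have he : ∀ i, |e i| ≤ (((d : ℤ) * K + 1 : ℤ) : ℝ)⁻¹ := by
    intro i
    have := hy i
    have hwi : ((w i : ℤ) : ℝ) = (n i : ℝ) - (r i : ℝ) := by
      rw [hwdef]; push_cast [Pi.sub_apply]; ring
    rw [hedef]
    simp only [hwi]
    convert this using 2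
    ring
  have hw0 : L.mulVec w = 0 := by
    funext i
    have h2 : ((L.mulVec w i : ℤ) : ℝ) = ((L.map (Int.cast : ℤ → ℝ)).mulVec e) i := by
      rw [cast_mulVec_s8]
      have hsplit : (fun j => ((w j : ℤ) : ℝ)) = e + Xr.mulVec y := by
        funext j; simp [hedef]
      rw [hsplit, Matrix.mulVec_add]
      have hz : (L.map (Int.cast : ℤ → ℝ)).mulVec (Xr.mulVec y) = 0 := by
        rw [Matrix.mulVec_mulVec, hLXr, Matrix.zero_mulVec]
      rw [hz]; simp
    have h3 : |((L.map (Int.cast : ℤ → ℝ)).mulVec e) i| ≤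
        (d : ℝ) * ((K : ℝ) * (((d : ℤ) * K + 1 : ℤ) : ℝ)⁻¹) := by
      have hexp : ((L.map (Int.cast : ℤ → ℝ)).mulVec e) i = ∑ j, ((L i j : ℤ) : ℝ) * e j := by
        simp [Matrix.mulVec, dotProduct, Matrix.map_apply]
      rw [hexp]
      calc |∑ j, ((L i j : ℤ) : ℝ) * e j| ≤ ∑ j, |((L i j : ℤ) : ℝ) * e j| :=
            Finset.abs_sum_le_sum_abs _ _
        _ ≤ ∑ _j : Fin d, (K : ℝ) * (((d : ℤ) * K + 1 : ℤ) : ℝ)⁻¹ := by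
            apply Finset.sum_le_sum
            intro j _
            rw [abs_mul]
            have h4 : |((L i j : ℤ) : ℝ)| ≤ (K : ℝ) := by
              rw [← Int.cast_abs]; exact_mod_cast hLb i j
            exact mul_le_mul h4 (he j) (abs_nonneg _) (by exact_mod_cast hK0)
        _ = (d : ℝ) * ((K : ℝ) * (((d : ℤ) * K + 1 : ℤ) : ℝ)⁻¹) := by
            simp [Finset.sum_const, Finset.card_univ]
    have h5 : (d : ℝ) * ((K : ℝ) * (((d : ℤ) * K + 1 : ℤ) : ℝ)⁻¹) < 1 := by
      rw [← mul_assoc]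
      have hlt : ((d : ℝ) * (K : ℝ)) < (((d : ℤ) * K + 1 : ℤ) : ℝ) := by
        push_cast; linarith
      calc (d : ℝ) * (K : ℝ) * (((d : ℤ) * K + 1 : ℤ) : ℝ)⁻¹
          < (((d : ℤ) * K + 1 : ℤ) : ℝ) * (((d : ℤ) * K + 1 : ℤ) : ℝ)⁻¹ :=
            mul_lt_mul_of_pos_right hlt (inv_pos.mpr hdKR)
        _ = 1 := mul_inv_cancel₀ hdKR.ne'
    have h6 : |((L.mulVec w i : ℤ) : ℝ)| < 1 := by rw [h2]; exact lt_of_le_of_lt h3 h5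
    have h7 : |L.mulVec w i| < 1 := by exact_mod_cast h6
    simpa using Int.abs_lt_one_iff.mp h7
  have hMw : M.mulVec w = G.det • w := by
    have := hw0
    rw [hLdef, Matrix.sub_mulVec, Matrix.smul_mulVec, Matrix.one_mulVec,
      sub_eq_zero] at this
    exact this.symm
  have hDne : ((G.det : ℤ) : ℝ) ≠ 0 := by
    have hmap : (G.map (Int.cast : ℤ → ℝ)).det ≠ 0 := by
      intro h0
      obtain ⟨v, hvne, hv0⟩ := (Matrix.exists_mulVec_eq_zero_iff).mpr h0
      apply hvne
      have hGr : G.map (Int.cast : ℤ → ℝ) = Xrᵀ * Xr := by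
        ext i j
        rw [hXrdef]
        simp only [Matrix.mul_apply, Matrix.map_apply, Matrix.transpose_apply, hGdef]
        push_cast
        rfl
      have hdot : (Xr.mulVec v) ⬝ᵥ (Xr.mulVec v) = 0 := by
        have h1 : Xrᵀ.mulVec (Xr.mulVec v) = 0 := by
          rw [Matrix.mulVec_mulVec, ← hGr, hv0]
        calc (Xr.mulVec v) ⬝ᵥ (Xr.mulVec v) = (v ᵥ* Xrᵀ) ⬝ᵥ (Xr.mulVec v) := by
              rw [Matrix.vecMul_transpose]
          _ = v ⬝ᵥ Xrᵀ.mulVec (Xr.mulVec v) := (Matrix.dotProduct_mulVec _ _ _).symm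
          _ = 0 := by rw [h1, dotProduct_zero]
      have hXv : Xr.mulVec v = 0 := dotProduct_self_eq_zero.mp hdot
      exact hinj (hXv.trans (Matrix.mulVec_zero Xr).symm)
    have := RingHom.map_det (Int.castRingHom ℝ) G
    simp only [RingHom.mapMatrix_apply, Int.coe_castRingHom] at this
    rw [this]
    exact hmap
  have hmem : w ∈ {n : Fin d → ℤ | ∃ m : Fin h → ℤ, X.mulVec m = n} := by
    rw [hlat]
    refine ⟨((G.det : ℤ) : ℝ)⁻¹ • fun j => ((A.mulVec w j : ℤ) : ℝ), ?_⟩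
    have h2 : X.mulVec (A.mulVec w) = G.det • w := by
      rw [Matrix.mulVec_mulVec]; exact hMw
    funext i
    rw [Matrix.mulVec_smul, Pi.smul_apply]
    have h1 : (Xr.mulVec fun j => ((A.mulVec w j : ℤ) : ℝ)) i
        = ((X.mulVec (A.mulVec w) i : ℤ) : ℝ) := by
      rw [hXrdef, ← cast_mulVec_s8]
    rw [h1, h2]
    have h3 : ((G.det • w) i : ℝ) = (G.det : ℝ) * (w i : ℝ) := by
      simp only [Pi.smul_apply, smul_eq_mul]; push_cast; ring
    rw [h3, smul_eq_mul, ← mul_assoc, inv_mul_cancel₀ hDne, one_mul]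
  obtain ⟨m, hm⟩ := hmem
  refine ⟨m, ?_, ?_⟩
  · show n = X.mulVec m + r
    rw [hm, hwdef]
    funext i
    simp
  · intro m' hm'
    replace hm' : n = X.mulVec m' + r := hm'
    have hXm : X.mulVec m' = X.mulVec m := by
      rw [hm, hwdef]
      funext i
      have := congrFun hm' i
      simp [Pi.add_apply, Pi.sub_apply] at this ⊢
      omega
    have hcast : Xr.mulVec (fun j => ((m' j : ℤ) : ℝ)) = Xr.mulVec (fun j => ((m j : ℤ) : ℝ)) := by
      funext i
      rw [hXrdef, ← cast_mulVec_s8, ← cast_mulVec_s8, hXm]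
    have := hinj hcast
    funext j
    have := congrFun this j
    exact_mod_cast this
end

section
/- Let m, d be natural numbers with d ≥ m+2, and let L be an m-by-(m+2) real matrix of rank m. Then there exists a nonzero vector in the row space of L having at most two nonzero coordinates if and only if some m-by-m submatrix of L has determinant zero. -/
theorem stmt_11 (m : ℕ) (L : Matrix (Fin m) (Fin (m + 2)) ℝ) (hL : L.rank = m) :
    (∃ v : Fin (m + 2) → ℝ, v ≠ 0 ∧ (∃ a : Fin m → ℝ, v = Matrix.vecMul a L) ∧
      ∃ i j : Fin (m + 2), ∀ k, k ≠ i → k ≠ j → v k = 0) ↔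
    ∃ g : Fin m → Fin (m + 2), Function.Injective g ∧ (L.submatrix id g).det = 0 := by
  -- vecMul with L is injective since rank L = m
  have hinj : ∀ a : Fin m → ℝ, Matrix.vecMul a L = 0 → a = 0 := by
    intro a ha
    have hrank : L.transpose.rank = m := by rw [Matrix.rank_transpose]; exact hL
    have h1 : Module.finrank ℝ (LinearMap.range L.transpose.mulVecLin) = m := hrank
    have h2 := LinearMap.finrank_range_add_finrank_ker L.transpose.mulVecLin
    have h3 : Module.finrank ℝ (Fin m → ℝ) = m := by simp
    rw [h1, h3] at h2
    have hker : Module.finrank ℝ (LinearMap.ker L.transpose.mulVecLin) = 0 := by omega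
    have hbot : LinearMap.ker L.transpose.mulVecLin = ⊥ := Submodule.finrank_eq_zero.mp hker
    have hma : a ∈ LinearMap.ker L.transpose.mulVecLin := by
      simp only [LinearMap.mem_ker, Matrix.mulVecLin_apply, Matrix.mulVec_transpose, ha]
    rw [hbot, Submodule.mem_bot] at hma
    exact hma
  constructor
  · rintro ⟨v, hv0, ⟨a, hva⟩, i, j, hij⟩
    have ha0 : a ≠ 0 := by
      rintro rfl
      apply hv0
      rw [hva, Matrix.zero_vecMul]
    have hcard : m ≤ ({i, j}ᶜ : Finset (Fin (m + 2))).card := by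
      have h1 : ({i, j} : Finset (Fin (m + 2))).card ≤ 2 :=
        (Finset.card_insert_le _ _).trans (by simp)
      have := Finset.card_compl ({i, j} : Finset (Fin (m + 2)))
      simp only [Fintype.card_fin] at this
      omega
    obtain ⟨t, hts, htc⟩ := Finset.exists_subset_card_eq hcard
    refine ⟨t.orderEmbOfFin htc, (t.orderEmbOfFin htc).injective, ?_⟩
    rw [← Matrix.exists_vecMul_eq_zero_iff]
    refine ⟨a, ha0, ?_⟩
    funext l
    have hmem : (t.orderEmbOfFin htc) l ∈ ({i, j}ᶜ : Finset (Fin (m + 2))) :=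
      hts (t.orderEmbOfFin_mem htc l)
    simp only [Finset.mem_compl, Finset.mem_insert, Finset.mem_singleton, not_or] at hmem
    have hvz : v ((t.orderEmbOfFin htc) l) = 0 := hij _ hmem.1 hmem.2
    rw [hva] at hvz
    simpa [Matrix.vecMul, dotProduct, Matrix.submatrix] using hvz
  · rintro ⟨g, hg, hdet⟩
    obtain ⟨a, ha0, ha⟩ := Matrix.exists_vecMul_eq_zero_iff.mpr hdet
    refine ⟨Matrix.vecMul a L, ?_, ⟨a, rfl⟩, ?_⟩
    · intro h
      exact ha0 (hinj a h)
    · have hcard : ((Finset.univ.image g)ᶜ : Finset (Fin (m + 2))).card = 2 := by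
        rw [Finset.card_compl, Finset.card_image_of_injective _ hg]
        simp
      obtain ⟨i, j, _, hij⟩ := Finset.card_eq_two.mp hcard
      refine ⟨i, j, fun k hki hkj => ?_⟩
      have hk : k ∈ Finset.univ.image g := by
        by_contra hk
        have : k ∈ ((Finset.univ.image g)ᶜ : Finset (Fin (m + 2))) := Finset.mem_compl.mpr hk
        rw [hij] at this
        simp only [Finset.mem_insert, Finset.mem_singleton] at this
        tauto
      obtain ⟨l, _, rfl⟩ := Finset.mem_image.mp hk
      have := congrFun ha l
      simpa [Matrix.vecMul, dotProduct, Matrix.submatrix] using this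
end

section
/- Let s be a natural number and let η > 0 be sufficiently small in terms of s. Let χ : ℝ → [0,1] be a measurable function supported on [−η, η] with χ(x) = 1 for |x| ≤ η/2. Let N be a natural number and f : {1,…,N} → ℝ arbitrary, and define (f ∗ χ)(x) = Σ_{n ∈ ℤ} f(n) χ(x − n), viewed as a function supported on [−2N, 2N]. Then ‖f ∗ χ‖_{U^{s+1}(ℝ, 2N)} ≤ K · η^{(s+2)/2^{s+1}} · ‖f‖_{U^{s+1}[N]}, where K depends only on s. -/
open MeasureTheory

noncomputable def realGowersPow (s : ℕ) (N : ℝ) (g : ℝ → ℝ) : ℝ :=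
  (1 / N ^ (s + 2)) *
    ∫ z : ℝ × (Fin (s + 1) → ℝ),
      ∏ ω : Fin (s + 1) → Bool, g (z.1 + ∑ i, if ω i then z.2 i else 0)

noncomputable def realGowersNorm (s : ℕ) (N : ℝ) (g : ℝ → ℝ) : ℝ :=
  realGowersPow s N g ^ ((1 : ℝ) / 2 ^ (s + 1))

noncomputable def discreteGowersPow (s : ℕ) (N : ℝ) (f : ℤ → ℝ) : ℝ :=
  (1 / N ^ (s + 2)) *
    ∑' z : ℤ × (Fin (s + 1) → ℤ),
      ∏ ω : Fin (s + 1) → Bool, f (z.1 + ∑ i, if ω i then z.2 i else 0)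

noncomputable def discreteGowersNorm (s : ℕ) (N : ℝ) (f : ℤ → ℝ) : ℝ :=
  discreteGowersPow s N f ^ ((1 : ℝ) / 2 ^ (s + 1))

noncomputable def convZ (f : ℤ → ℝ) (χ : ℝ → ℝ) (x : ℝ) : ℝ := ∑' n : ℤ, f n * χ (x - n)

namespace Stmt14Aux

open Finset

noncomputable def Phi (s : ℕ) (χ : ℝ → ℝ) (z : ℝ × (Fin (s + 1) → ℝ)) : ℝ :=
  ∏ ω : Fin (s + 1) → Bool, χ (z.1 + ∑ i, if ω i then z.2 i else 0)

variable {s : ℕ} {η : ℝ} {χ : ℝ → ℝ} {N : ℕ} {f : ℤ → ℝ}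

lemma far {η : ℝ} (c A B : ℝ) (hA : |A| ≤ c) (hB : (1 : ℝ) ≤ |B|) (h : c + η < 1) :
    η < |A + B| := by
  have h3 : |B| ≤ |A + B| + |A| := by
    have he : B = (A + B) + (-A) := by ring
    calc |B| = |(A + B) + (-A)| := by rw [← he]
      _ ≤ |A + B| + |(-A)| := abs_add_le _ _
      _ = |A + B| + |A| := by rw [abs_neg]
  linarith

noncomputable def Pf (f : ℤ → ℝ) (n : ℤ) (m : Fin (s + 1) → ℤ) : ℝ :=
  ∏ ω : Fin (s + 1) → Bool, f (n + ∑ i, if ω i then m i else 0)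

noncomputable def J (s N : ℕ) : Finset (ℤ × (Fin (s + 1) → ℤ)) :=
  Finset.Icc (1 : ℤ) (N : ℤ) ×ˢ Fintype.piFinset fun _ => Finset.Icc (1 - (N : ℤ)) ((N : ℤ) - 1)

lemma Pf_eq_zero (hf : ∀ n : ℤ, n < 1 ∨ (N : ℤ) < n → f n = 0)
    {nm : ℤ × (Fin (s + 1) → ℤ)} (h : nm ∉ J s N) : Pf f nm.1 nm.2 = 0 := by
  obtain ⟨n, m⟩ := nm
  by_cases hn : n ∈ Finset.Icc (1 : ℤ) (N : ℤ)
  · have hm : m ∉ Fintype.piFinset fun _ : Fin (s + 1) => Finset.Icc (1 - (N : ℤ)) ((N : ℤ) - 1) :=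
      fun hm' => h (Finset.mem_product.2 ⟨hn, hm'⟩)
    rw [Fintype.mem_piFinset] at hm
    push_neg at hm
    obtain ⟨i, hi⟩ := hm
    rw [Finset.mem_Icc] at hn hi
    push_neg at hi
    apply Finset.prod_eq_zero (Finset.mem_univ (fun j => decide (j = i) : Fin (s + 1) → Bool))
    have harg : (∑ j, if (decide (j = i) : Bool) then m j else 0) = m i := by simp
    rw [harg]
    apply hf
    rcases lt_or_ge (m i) (1 - (N : ℤ)) with h' | h'
    · left; omega
    · right
      have := hi h'
      omega
  · apply Finset.prod_eq_zero (Finset.mem_univ (fun _ => false : Fin (s + 1) → Bool))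
    simp only [Bool.false_eq_true, if_false, Finset.sum_const_zero, add_zero]
    apply hf
    rw [Finset.mem_Icc] at hn; omega

lemma convZ_eq_sum (hf : ∀ n : ℤ, n < 1 ∨ (N : ℤ) < n → f n = 0) (y : ℝ) :
    convZ f χ y = ∑ n ∈ Finset.Icc (1 : ℤ) (N : ℤ), f n * χ (y - n) := by
  apply tsum_eq_sum
  intro b hb
  rw [Finset.mem_Icc] at hb
  rw [hf b (by omega), zero_mul]

lemma convZ_zero (hf : ∀ n : ℤ, n < 1 ∨ (N : ℤ) < n → f n = 0)
    (hsupp : ∀ x, η < |x| → χ x = 0) {y : ℝ} (hy : ∀ k : ℤ, η < |y - k|) :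
    convZ f χ y = 0 := by
  rw [convZ_eq_sum hf]
  apply Finset.sum_eq_zero
  intro n _
  rw [hsupp _ (hy n), mul_zero]

lemma key_pointwise (hη : 0 < η) (hη' : η < 1 / (4 * s + 8))
    (hsupp : ∀ x, η < |x| → χ x = 0)
    (hf : ∀ n : ℤ, n < 1 ∨ (N : ℤ) < n → f n = 0)
    (z : ℝ × (Fin (s + 1) → ℝ)) :
    (∏ ω : Fin (s + 1) → Bool, convZ f χ (z.1 + ∑ i, if ω i then z.2 i else 0)) =
      ∑ nm ∈ J s N, Pf f nm.1 nm.2 *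
        Phi s χ (z.1 - (nm.1 : ℝ), fun i => z.2 i - (nm.2 i : ℝ)) := by
  have hs8 : (0:ℝ) < 4 * s + 8 := by positivity
  have hη1 : (2 * (s:ℝ) + 4) * η < 1 := by
    rw [lt_div_iff₀ hs8] at hη'
    nlinarith
  have hη2 : η < 1 / 2 := by nlinarith
  by_cases hx : ∃ n : ℤ, |z.1 - n| ≤ η
  · by_cases hh : ∀ i, ∃ k : ℤ, |z.1 + z.2 i - k| ≤ η
    · -- main case
      obtain ⟨n, hn⟩ := hx
      choose k hk using hh
      set m : Fin (s + 1) → ℤ := fun i => k i - n with hm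
      have hmi : ∀ i, |z.2 i - (m i : ℝ)| ≤ 2 * η := by
        intro i
        have h1 := hk i
        have he : z.2 i - (m i : ℝ) = (z.1 + z.2 i - k i) - (z.1 - n) := by
          rw [hm]; push_cast; ring
        rw [he]
        calc |(z.1 + z.2 i - k i) - (z.1 - n)| ≤ |z.1 + z.2 i - k i| + |z.1 - n| :=
              abs_sub _ _
          _ ≤ 2 * η := by linarith
      have K1 : ∀ ω : Fin (s + 1) → Bool,
          convZ f χ (z.1 + ∑ i, if ω i then z.2 i else 0) =
            f (n + ∑ i, if ω i then m i else 0) *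
              χ (z.1 - n + ∑ i, if ω i then z.2 i - (m i : ℝ) else 0) := by
        intro ω
        set q : ℤ := n + ∑ i, if ω i then m i else 0 with hq
        set y : ℝ := z.1 + ∑ i, if ω i then z.2 i else 0 with hy
        have hsum : (∑ i, if ω i then z.2 i - (m i : ℝ) else 0)
            = (∑ i, if ω i then z.2 i else 0) - ∑ i, if ω i then (m i : ℝ) else 0 := by
          rw [← Finset.sum_sub_distrib]
          apply Finset.sum_congr rfl
          intro i _
          by_cases hω : ω i = true <;> simp [hω]
        have hyq : y - (q : ℝ) = (z.1 - n) + ∑ i, if ω i then z.2 i - (m i : ℝ) else 0 := by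
          rw [hy, hq]
          push_cast [apply_ite (fun r : ℤ => (r : ℝ))]
          rw [hsum]
          ring
        have hyqb : |y - (q : ℝ)| ≤ (2 * s + 3) * η := by
          rw [hyq]
          calc |(z.1 - n) + ∑ i, if ω i then z.2 i - (m i : ℝ) else 0|
              ≤ |z.1 - n| + |∑ i, if ω i then z.2 i - (m i : ℝ) else 0| := abs_add_le _ _
            _ ≤ η + ∑ _i : Fin (s + 1), (2 * η) := by
                gcongr
                calc |∑ i, if ω i then z.2 i - (m i : ℝ) else 0|
                    ≤ ∑ i, |if ω i then z.2 i - (m i : ℝ) else 0| :=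
                      Finset.abs_sum_le_sum_abs _ _
                  _ ≤ ∑ _i : Fin (s + 1), (2 * η) := by
                      apply Finset.sum_le_sum
                      intro i _
                      by_cases hω : ω i = true <;> simp [hω]
                      · exact hmi i
                      · positivity
            _ = (2 * s + 3) * η := by
                rw [Finset.sum_const, Finset.card_univ, Fintype.card_fin]
                push_cast; ring
        rw [convZ_eq_sum hf]
        rw [Finset.sum_eq_single q]
        · rw [hyq]
        · intro j hj hjq
          have h1 : (1 : ℝ) ≤ |((q - j : ℤ) : ℝ)| := by
            exact_mod_cast Int.one_le_abs (sub_ne_zero.2 hjq.symm)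
          have hfar : η < |y - (j:ℝ)| := by
            have he : y - (j:ℝ) = (y - q) + ((q - j : ℤ) : ℝ) := by push_cast; ring
            rw [he]
            apply far ((2 * s + 3) * η) _ _ hyqb h1
            nlinarith
          rw [hsupp _ hfar, mul_zero]
        · intro hq'
          rw [Finset.mem_Icc] at hq'
          rw [hf q (by omega), zero_mul]
      calc (∏ ω : Fin (s + 1) → Bool, convZ f χ (z.1 + ∑ i, if ω i then z.2 i else 0))
          = ∏ ω : Fin (s + 1) → Bool,
              (f (n + ∑ i, if ω i then m i else 0) *
                χ (z.1 - n + ∑ i, if ω i then z.2 i - (m i : ℝ) else 0)) :=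
            Finset.prod_congr rfl fun ω _ => K1 ω
        _ = Pf f n m * Phi s χ (z.1 - (n : ℝ), fun i => z.2 i - (m i : ℝ)) := by
            rw [Finset.prod_mul_distrib]; rfl
        _ = ∑ nm ∈ J s N, Pf f nm.1 nm.2 *
              Phi s χ (z.1 - (nm.1 : ℝ), fun i => z.2 i - (nm.2 i : ℝ)) := by
            rw [eq_comm]
            apply Finset.sum_eq_single (n, m)
            · rintro ⟨n', m'⟩ _ hne
              by_cases hn' : n' = n
              · subst hn'
                have hm' : ∃ i, m' i ≠ m i := by
                  by_contra hc
                  push_neg at hc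
                  exact hne (by rw [funext hc])
                obtain ⟨i, hi⟩ := hm'
                have hz0 : Phi s χ (z.1 - (n' : ℝ), fun j => z.2 j - (m' j : ℝ)) = 0 := by
                  apply Finset.prod_eq_zero
                    (Finset.mem_univ (fun j => decide (j = i) : Fin (s + 1) → Bool))
                  have harg : ((z.1 - (n' : ℝ), fun j => z.2 j - (m' j : ℝ)).1 +
                      ∑ j, if (decide (j = i) : Bool) then
                        (z.1 - (n' : ℝ), fun j => z.2 j - (m' j : ℝ)).2 j else 0)
                      = (z.1 + z.2 i - k i) + ((k i - (n' + m' i) : ℤ) : ℝ) := by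
                    have hss : (∑ j, if (decide (j = i) : Bool) then z.2 j - ((m' j : ℤ) : ℝ) else 0)
                        = z.2 i - (m' i : ℝ) := by simp
                    simp only []
                    rw [hss]
                    push_cast
                    ring
                  rw [harg]
                  apply hsupp
                  apply far η _ _ (hk i)
                  · have hne2 : k i - (n' + m' i) ≠ 0 := by
                      have : m i = k i - n' := by rw [hm]
                      omega
                    exact_mod_cast Int.one_le_abs hne2
                  · linarith
                rw [hz0, mul_zero]
              · have hz0 : Phi s χ (z.1 - (n' : ℝ), fun j => z.2 j - (m' j : ℝ)) = 0 := by
                  apply Finset.prod_eq_zero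
                    (Finset.mem_univ (fun _ => false : Fin (s + 1) → Bool))
                  simp only [Bool.false_eq_true, if_false, Finset.sum_const_zero, add_zero]
                  apply hsupp
                  have he : z.1 - (n' : ℝ) = (z.1 - n) + ((n - n' : ℤ) : ℝ) := by
                    push_cast; ring
                  rw [he]
                  apply far η _ _ hn
                  · have hne2 : n - n' ≠ 0 := fun hc => hn' (by omega)
                    exact_mod_cast Int.one_le_abs hne2
                  · linarith
                rw [hz0, mul_zero]
            · intro hnm
              rw [Pf_eq_zero hf hnm, zero_mul]
    · push_neg at hh
      obtain ⟨i, hi⟩ := hh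
      trans (0 : ℝ)
      · apply Finset.prod_eq_zero
          (Finset.mem_univ (fun j => decide (j = i) : Fin (s + 1) → Bool))
        have harg : (z.1 + ∑ j, if (decide (j = i) : Bool) then z.2 j else 0) = z.1 + z.2 i := by
          simp
        rw [harg]
        apply convZ_zero hf hsupp
        intro k'
        exact hi k'
      · rw [eq_comm]
        apply Finset.sum_eq_zero
        rintro ⟨n, m⟩ _
        have hz0 : Phi s χ (z.1 - (n : ℝ), fun j => z.2 j - (m j : ℝ)) = 0 := by
          apply Finset.prod_eq_zero
            (Finset.mem_univ (fun j => decide (j = i) : Fin (s + 1) → Bool))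
          have harg : ((z.1 - (n : ℝ), fun j => z.2 j - (m j : ℝ)).1 +
              ∑ j, if (decide (j = i) : Bool) then
                (z.1 - (n : ℝ), fun j => z.2 j - (m j : ℝ)).2 j else 0)
              = (z.1 + z.2 i) - ((n + m i : ℤ) : ℝ) := by
            have hss : (∑ j, if (decide (j = i) : Bool) then z.2 j - ((m j : ℤ) : ℝ) else 0)
                = z.2 i - (m i : ℝ) := by simp
            simp only []
            rw [hss]
            push_cast
            ring
          rw [harg]
          exact hsupp _ (hi (n + m i))
        rw [hz0, mul_zero]
  · push_neg at hx
    trans (0 : ℝ)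
    · apply Finset.prod_eq_zero (Finset.mem_univ (fun _ => false : Fin (s + 1) → Bool))
      simp only [Bool.false_eq_true, if_false, Finset.sum_const_zero, add_zero]
      exact convZ_zero hf hsupp hx
    · rw [eq_comm]
      apply Finset.sum_eq_zero
      rintro ⟨n, m⟩ _
      have hz0 : Phi s χ (z.1 - (n : ℝ), fun j => z.2 j - (m j : ℝ)) = 0 := by
        apply Finset.prod_eq_zero (Finset.mem_univ (fun _ => false : Fin (s + 1) → Bool))
        simp only [Bool.false_eq_true, if_false, Finset.sum_const_zero, add_zero]
        exact hsupp _ (hx n)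
      rw [hz0, mul_zero]


instance voladd {s : ℕ} : (volume : Measure (ℝ × (Fin (s + 1) → ℝ))).IsAddLeftInvariant := by
  rw [Measure.volume_eq_prod]; infer_instance

lemma measurable_phi (hχ : Measurable χ) : Measurable (Phi s χ) := by
  apply Finset.measurable_prod
  intro ω _
  apply hχ.comp
  apply Measurable.add measurable_fst
  apply Finset.measurable_sum
  intro i _
  by_cases h : ω i = true <;> simp [h]
  exact (measurable_pi_apply i).comp measurable_snd

lemma phi_nonneg (hb : ∀ x, 0 ≤ χ x ∧ χ x ≤ 1) (z) : 0 ≤ Phi s χ z :=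
  Finset.prod_nonneg fun ω _ => (hb _).1

def Pset (s : ℕ) (η : ℝ) : Set (ℝ × (Fin (s + 1) → ℝ)) :=
  Set.Icc (-η) η ×ˢ Set.pi Set.univ fun _ => Set.Icc (-(2 * η)) (2 * η)

lemma measurableSet_Pset : MeasurableSet (Pset s η) :=
  measurableSet_Icc.prod (MeasurableSet.univ_pi fun _ => measurableSet_Icc)

lemma volume_Pset (hη : 0 < η) :
    (volume (Pset s η)).toReal = 2 * η * (4 * η) ^ (s + 1) := by
  rw [Pset, Measure.volume_eq_prod, Measure.prod_prod, volume_pi_pi]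
  simp only [Real.volume_Icc]
  rw [Finset.prod_const, Finset.card_univ, Fintype.card_fin]
  rw [ENNReal.toReal_mul, ENNReal.toReal_pow, ENNReal.toReal_ofReal (by linarith),
    ENNReal.toReal_ofReal (by linarith)]
  ring_nf

lemma integrable_indicator_Pset :
    Integrable ((Pset s η).indicator (fun _ => (1 : ℝ))) := by
  rw [integrable_indicator_iff measurableSet_Pset]
  refine integrableOn_const (ne_of_lt ?_)
  rw [Pset, Measure.volume_eq_prod, Measure.prod_prod, volume_pi_pi]
  simp only [Real.volume_Icc]
  exact ENNReal.mul_lt_top ENNReal.ofReal_lt_top (by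
    rw [Finset.prod_const]
    exact ENNReal.pow_lt_top ENNReal.ofReal_lt_top)

lemma phi_le_indicator (hb : ∀ x, 0 ≤ χ x ∧ χ x ≤ 1)
    (hsupp : ∀ x, η < |x| → χ x = 0) (z : ℝ × (Fin (s + 1) → ℝ)) :
    Phi s χ z ≤ (Pset s η).indicator (fun _ => (1 : ℝ)) z := by
  by_cases hz : |z.1| ≤ η ∧ ∀ i, |z.1 + z.2 i| ≤ η
  · have hmem : z ∈ Pset s η := by
      constructor
      · exact abs_le.1 hz.1
      · intro i _
        have h1 := hz.1
        have h2 := hz.2 i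
        rw [abs_le] at h1 h2
        simp only [Set.mem_Icc]
        constructor <;> nlinarith [h1.1, h1.2, h2.1, h2.2]
    rw [Set.indicator_of_mem hmem]
    exact Finset.prod_le_one (fun ω _ => (hb _).1) (fun ω _ => (hb _).2)
  · have hz0 : Phi s χ z = 0 := by
      rw [not_and_or] at hz
      rcases hz with hz | hz
      · apply Finset.prod_eq_zero (Finset.mem_univ (fun _ => false : Fin (s + 1) → Bool))
        simp only [Bool.false_eq_true, if_false, Finset.sum_const_zero, add_zero]
        exact hsupp _ (lt_of_not_ge hz)
      · push_neg at hz
        obtain ⟨i, hi⟩ := hz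
        apply Finset.prod_eq_zero
          (Finset.mem_univ (fun j => decide (j = i) : Fin (s + 1) → Bool))
        have harg : (z.1 + ∑ j, if (decide (j = i) : Bool) then z.2 j else 0) = z.1 + z.2 i := by
          simp
        rw [harg]
        exact hsupp _ hi
    rw [hz0]
    exact Set.indicator_nonneg (fun _ _ => zero_le_one) z

lemma integrable_phi (hχ : Measurable χ) (hb : ∀ x, 0 ≤ χ x ∧ χ x ≤ 1)
    (hsupp : ∀ x, η < |x| → χ x = 0) : Integrable (Phi s χ) := by
  apply Integrable.mono' integrable_indicator_Pset (measurable_phi hχ).aestronglyMeasurable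
  filter_upwards with z
  rw [Real.norm_eq_abs, abs_of_nonneg (phi_nonneg hb z)]
  exact phi_le_indicator hb hsupp z

lemma integral_phi_le (hη : 0 < η) (hχ : Measurable χ) (hb : ∀ x, 0 ≤ χ x ∧ χ x ≤ 1)
    (hsupp : ∀ x, η < |x| → χ x = 0) :
    ∫ z, Phi s χ z ≤ 2 * η * (4 * η) ^ (s + 1) := by
  calc ∫ z, Phi s χ z ≤ ∫ z, (Pset s η).indicator (fun _ => (1 : ℝ)) z :=
        integral_mono (integrable_phi hχ hb hsupp) integrable_indicator_Pset
          (phi_le_indicator hb hsupp)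
    _ = (volume (Pset s η)).toReal • (1 : ℝ) := integral_indicator_const _ measurableSet_Pset
    _ = 2 * η * (4 * η) ^ (s + 1) := by rw [smul_eq_mul, mul_one, volume_Pset hη]

lemma rpow_neg_base (D : ℝ) (hD : D < 0) (p : ℝ) :
    D ^ p = Real.exp (Real.log D * p) * Real.cos (p * Real.pi) := by
  rw [Real.rpow_def_of_neg hD, mul_comm p Real.pi]

lemma rpow_nn {D p : ℝ} (hp : 0 < p) (hp2 : p ≤ 1 / 2) : 0 ≤ D ^ p := by
  rcases le_or_gt 0 D with h | h
  · exact Real.rpow_nonneg h p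
  · rw [rpow_neg_base D h]
    have hcos : 0 ≤ Real.cos (p * Real.pi) := by
      apply Real.cos_nonneg_of_mem_Icc
      constructor
      · nlinarith [Real.pi_pos]
      · nlinarith [Real.pi_pos]
    positivity

lemma stepF {a b D p : ℝ} (ha : 0 ≤ a) (hab : a ≤ b) (hb : 0 < b)
    (hp : 0 < p) (hp2 : p ≤ 1 / 2) : (a * D) ^ p ≤ b ^ p * D ^ p := by
  have hcos : 0 ≤ Real.cos (p * Real.pi) := by
    apply Real.cos_nonneg_of_mem_Icc
    constructor
    · nlinarith [Real.pi_pos]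
    · nlinarith [Real.pi_pos]
  rcases le_or_gt 0 D with hD | hD
  · rw [Real.mul_rpow ha hD]
    exact mul_le_mul_of_nonneg_right (Real.rpow_le_rpow ha hab hp.le)
      (Real.rpow_nonneg hD p)
  · rcases eq_or_lt_of_le ha with rfl | ha'
    · rw [zero_mul, Real.zero_rpow hp.ne', rpow_neg_base D hD]
      positivity
    · have haD : a * D < 0 := mul_neg_of_pos_of_neg ha' hD
      rw [rpow_neg_base _ haD, rpow_neg_base D hD]
      rw [Real.log_mul ha'.ne' hD.ne]
      have h1 : Real.exp ((Real.log a + Real.log D) * p)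
          = Real.exp (Real.log a * p) * Real.exp (Real.log D * p) := by
        rw [← Real.exp_add]; ring_nf
      rw [h1, ← mul_assoc]
      apply mul_le_mul_of_nonneg_right _ hcos
      rw [mul_comm (Real.exp (Real.log a * p)) _, mul_comm (b ^ p) _]
      apply mul_le_mul_of_nonneg_left _ (Real.exp_nonneg _)
      rw [← Real.rpow_def_of_pos ha']
      exact Real.rpow_le_rpow ha'.le hab hp.le

end Stmt14Aux

open Stmt14Aux

theorem stmt_14 (s : ℕ) :
    ∃ K > (0 : ℝ), ∃ η₀ > (0 : ℝ), ∀ η : ℝ, 0 < η → η < η₀ →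
      ∀ χ : ℝ → ℝ, Measurable χ → (∀ x, 0 ≤ χ x ∧ χ x ≤ 1) →
        (∀ x : ℝ, η < |x| → χ x = 0) → (∀ x : ℝ, |x| ≤ η / 2 → χ x = 1) →
      ∀ N : ℕ, 0 < N → ∀ f : ℤ → ℝ, (∀ n : ℤ, n < 1 ∨ (N : ℤ) < n → f n = 0) →
        realGowersNorm s (2 * (N : ℝ)) (convZ f χ) ≤
          K * η ^ ((s + 2 : ℝ) / 2 ^ (s + 1)) * discreteGowersNorm s (N : ℝ) f := by
  refine ⟨2 ^ (s + 1), by positivity, 1 / (4 * s + 8), by positivity, ?_⟩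
  intro η hη hη' χ hχ hb hsupp _hone N hN f hf
  have hN0 : (0 : ℝ) < (N : ℝ) := by exact_mod_cast hN
  set p : ℝ := (1 : ℝ) / 2 ^ (s + 1) with hp
  have hp0 : 0 < p := by positivity
  have hp2 : p ≤ 1 / 2 := by
    rw [hp]
    apply one_div_le_one_div_of_le (by norm_num)
    calc (2 : ℝ) = 2 ^ 1 := (pow_one 2).symm
      _ ≤ 2 ^ (s + 1) := by
          apply pow_le_pow_right₀ one_le_two
          omega
  have hp1 : p ≤ 1 := by linarith
  have hWnn : 0 ≤ ∫ z, Phi s χ z := integral_nonneg (phi_nonneg hb)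
  have hWle := integral_phi_le (s := s) hη hχ hb hsupp
  have hint := integrable_phi (s := s) hχ hb hsupp
  have hS : (∑' z : ℤ × (Fin (s + 1) → ℤ),
      ∏ ω : Fin (s + 1) → Bool, f (z.1 + ∑ i, if ω i then z.2 i else 0))
      = ∑ nm ∈ J s N, Pf f nm.1 nm.2 :=
    tsum_eq_sum fun b hb' => Pf_eq_zero hf hb'
  have hI : (∫ z : ℝ × (Fin (s + 1) → ℝ),
      ∏ ω : Fin (s + 1) → Bool, convZ f χ (z.1 + ∑ i, if ω i then z.2 i else 0))
      = (∑ nm ∈ J s N, Pf f nm.1 nm.2) * ∫ z, Phi s χ z := by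
    have hptw : (fun z : ℝ × (Fin (s + 1) → ℝ) =>
        ∏ ω : Fin (s + 1) → Bool, convZ f χ (z.1 + ∑ i, if ω i then z.2 i else 0))
        = fun z => ∑ nm ∈ J s N, Pf f nm.1 nm.2 *
            Phi s χ (z - ((nm.1 : ℝ), fun i => (nm.2 i : ℝ))) :=
      funext fun z => key_pointwise hη hη' hsupp hf z
    rw [hptw, integral_finset_sum _ (fun nm _ => by
      apply Integrable.const_mul
      simp_rw [sub_eq_neg_add]
      exact hint.comp_add_left _)]
    rw [Finset.sum_mul]
    apply Finset.sum_congr rfl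
    intro nm _
    rw [integral_const_mul]
    congr 1
    simp_rw [sub_eq_neg_add]
    exact integral_add_left_eq_self (Phi s χ) _
  have hRP : realGowersPow s (2 * (N : ℝ)) (convZ f χ)
      = ((∫ z, Phi s χ z) / 2 ^ (s + 2)) * discreteGowersPow s (N : ℝ) f := by
    simp only [realGowersPow, discreteGowersPow]
    rw [hI, hS, mul_pow]
    field_simp
  have h4 : (4 : ℝ) ^ (s + 1) = 2 ^ (s + 1) * 2 ^ (s + 1) := by
    rw [show (4 : ℝ) = 2 * 2 by norm_num, mul_pow]
  have key : 2 * η * (4 * η) ^ (s + 1) = 2 ^ (s + 2) * (2 ^ (s + 1) * η ^ (s + 2)) := by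
    rw [mul_pow, h4, show s + 2 = (s + 1) + 1 from rfl, pow_succ (2 : ℝ) (s + 1),
      pow_succ η (s + 1)]
    ring
  have hab : (∫ z, Phi s χ z) / 2 ^ (s + 2) ≤ 2 ^ (s + 1) * η ^ (s + 2) := by
    rw [div_le_iff₀ (by positivity : (0 : ℝ) < 2 ^ (s + 2))]
    calc (∫ z, Phi s χ z) ≤ 2 * η * (4 * η) ^ (s + 1) := hWle
      _ = 2 ^ (s + 1) * η ^ (s + 2) * 2 ^ (s + 2) := by rw [key]; ring
  have hbpos : (0 : ℝ) < 2 ^ (s + 1) * η ^ (s + 2) := by positivity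
  have hbp : (2 ^ (s + 1) * η ^ (s + 2) : ℝ) ^ p
      ≤ 2 ^ (s + 1) * η ^ ((s + 2 : ℝ) / 2 ^ (s + 1)) := by
    rw [Real.mul_rpow (by positivity) (by positivity)]
    have h1 : ((2 : ℝ) ^ (s + 1)) ^ p ≤ 2 ^ (s + 1) := by
      calc ((2 : ℝ) ^ (s + 1)) ^ p ≤ ((2 : ℝ) ^ (s + 1)) ^ (1 : ℝ) :=
            Real.rpow_le_rpow_of_exponent_le (by
              calc (1 : ℝ) = 1 ^ (s + 1) := (one_pow _).symm
                _ ≤ 2 ^ (s + 1) := pow_le_pow_left₀ (by norm_num) one_le_two _) hp1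
        _ = 2 ^ (s + 1) := Real.rpow_one _
    have h2 : ((η : ℝ) ^ (s + 2)) ^ p = η ^ ((s + 2 : ℝ) / 2 ^ (s + 1)) := by
      rw [← Real.rpow_natCast η (s + 2), ← Real.rpow_mul hη.le]
      congr 1
      push_cast
      rw [hp]
      ring
    rw [h2]
    exact mul_le_mul_of_nonneg_right h1 (Real.rpow_nonneg (by positivity) _)
  have hDp : 0 ≤ discreteGowersPow s (N : ℝ) f ^ p := rpow_nn hp0 hp2
  simp only [realGowersNorm, discreteGowersNorm]
  rw [hRP]
  calc (((∫ z, Phi s χ z) / 2 ^ (s + 2)) * discreteGowersPow s (N : ℝ) f) ^ p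
      ≤ (2 ^ (s + 1) * η ^ (s + 2) : ℝ) ^ p * discreteGowersPow s (N : ℝ) f ^ p :=
        stepF (by positivity) hab hbpos hp0 hp2
    _ ≤ (2 ^ (s + 1) * η ^ ((s + 2 : ℝ) / 2 ^ (s + 1))) * discreteGowersPow s (N : ℝ) f ^ p :=
        mul_le_mul_of_nonneg_right hbp hDp
    _ = 2 ^ (s + 1) * η ^ ((s + 2 : ℝ) / 2 ^ (s + 1)) * discreteGowersPow s (N : ℝ) f ^ p := by
        ring
end
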